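/- Every [3,n,1]-graph with n ≥ 4 has a factor of independent transversals, and there exists a [3,3,1]-graph with no factor of independent transversals. (That is, f(3) = 4.) -/

import Mathlib

/-- A `[k,n,1]`-graph: the vertex set is `Fin k × Fin n`, partitioned into the `k` parts
`V_i = {i} × Fin n` (each of size `n`); there are no edges inside any part, and every
vertex has at most one neighbor in each part (the bipartite graph induced by any pair of
parts is a matching). -/
def IsKN1Graph {k n : ℕ} (G : SimpleGraph (Fin k × Fin n)) : Prop :=
  (∀ u v : Fin k × Fin n, G.Adj u v → u.1 ≠ v.1) ∧
  (∀ u v w : Fin k × Fin n, G.Adj u v → G.Adj u w → v.1 = w.1 → v = w)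

/-- An independent transversal, given by choosing the vertex `(i, f i)` in part `V_i`:
the chosen vertices form an independent set. -/
def IsIndepTransversal {k n : ℕ} (G : SimpleGraph (Fin k × Fin n)) (f : Fin k → Fin n) : Prop :=
  ∀ i j : Fin k, ¬ G.Adj (i, f i) (j, f j)

/-- A factor of independent transversals: `n` pairwise-disjoint independent transversals
(hence covering all vertices). Disjointness is expressed by saying that for each part `i`,
the `n` vertices chosen in `V_i` by the `n` transversals are pairwise distinct. -/
def HasITFactor {k n : ℕ} (G : SimpleGraph (Fin k × Fin n)) : Prop :=
  ∃ T : Fin n → Fin k → Fin n,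
    (∀ m : Fin n, IsIndepTransversal G (T m)) ∧
    (∀ i : Fin k, Function.Injective fun m : Fin n => T m i)

open Finset

/-- Hall-type lemma: if each row and each column forbids at most 2 entries and `n ≥ 4`,
there is a permutation avoiding all forbidden entries. -/
lemma exists_avoiding_perm {n : ℕ} (hn : 4 ≤ n) (F : Fin n → Fin n → Prop)
    [DecidableRel F]
    (hr : ∀ m, (univ.filter (fun v => F m v)).card ≤ 2)
    (hc : ∀ v, (univ.filter (fun m => F m v)).card ≤ 2) :
    ∃ σ : Equiv.Perm (Fin n), ∀ m, ¬ F m (σ m) := by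
  set t : Fin n → Finset (Fin n) := fun m => univ.filter (fun v => ¬ F m v) with ht
  have hall : ∀ s : Finset (Fin n), s.card ≤ (s.biUnion t).card := by
    intro s
    rcases s.eq_empty_or_nonempty with rfl | ⟨m, hm⟩
    · simp
    by_cases hcard : s.card ≤ n - 2
    · have h2 : n - 2 ≤ (t m).card := by
        have hh := Finset.card_filter_add_card_filter_not
          (s := (univ : Finset (Fin n))) (p := fun v => F m v)
        simp only [Finset.card_univ, Fintype.card_fin] at hh
        have he : t m = univ.filter (fun v => ¬ F m v) := rfl
        rw [he]
        have := hr m; omega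
      have h3 : t m ⊆ s.biUnion t := Finset.subset_biUnion_of_mem t hm
      have := Finset.card_le_card h3
      omega
    · have hbig : 3 ≤ s.card := by omega
      have : s.biUnion t = univ := by
        apply Finset.eq_univ_of_forall
        intro v
        have hbad := hc v
        have : 0 < (s \ univ.filter (fun m => F m v)).card := by
          have := Finset.le_card_sdiff (univ.filter (fun m => F m v)) s
          omega
        obtain ⟨m', hm'⟩ := Finset.card_pos.mp this
        rw [Finset.mem_sdiff] at hm'
        refine Finset.mem_biUnion.mpr ⟨m', hm'.1, ?_⟩
        simp only [ht, Finset.mem_filter, Finset.mem_univ, true_and]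
        intro h
        exact hm'.2 (by simp [h])
      rw [this]
      simpa using Finset.card_le_univ s
  obtain ⟨f, hfinj, hf⟩ := (Finset.all_card_le_biUnion_card_iff_exists_injective t).mp hall
  have hbij : Function.Bijective f := (Fintype.bijective_iff_injective_and_card f).mpr ⟨hfinj, rfl⟩
  refine ⟨Equiv.ofBijective f hbij, fun m => ?_⟩
  have := hf m
  simpa [ht] using this


/-- The permutation `0 ↦ 0, 1 ↦ 2, 2 ↦ 1` used in the counterexample. -/
def exRho : Fin 3 → Fin 3 := ![0, 2, 1]

/-- Adjacency function of the counterexample `[3,3,1]`-graph. -/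
def exAdj : Fin 3 × Fin 3 → Fin 3 × Fin 3 → Bool := fun u v =>
  (u.1 == 0 && v.1 == 1 && u.2 == v.2) || (u.1 == 1 && v.1 == 0 && u.2 == v.2) ||
  (u.1 == 0 && v.1 == 2 && u.2 == v.2) || (u.1 == 2 && v.1 == 0 && u.2 == v.2) ||
  (u.1 == 1 && v.1 == 2 && v.2 == exRho u.2) || (u.1 == 2 && v.1 == 1 && u.2 == exRho v.2)

/-- The counterexample `[3,3,1]`-graph. -/
def exGraph : SimpleGraph (Fin 3 × Fin 3) where
  Adj u v := exAdj u v = true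
  symm := by constructor; decide
  loopless := by constructor; decide

instance : DecidableRel exGraph.Adj :=
  fun u v => inferInstanceAs (Decidable (exAdj u v = true))


set_option maxRecDepth 100000 in
/-- `f(3) = 4`: every `[3,n,1]`-graph with `n ≥ 4` has a factor of independent
transversals, and there is a `[3,3,1]`-graph with no factor of independent transversals. -/
theorem stmt_7 :
    (∀ n : ℕ, 4 ≤ n → ∀ G : SimpleGraph (Fin 3 × Fin n), IsKN1Graph G → HasITFactor G) ∧
    (∃ G : SimpleGraph (Fin 3 × Fin 3), IsKN1Graph G ∧ ¬ HasITFactor G) := by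
  constructor
  · intro n hn G hG
    obtain ⟨hG1, hG2⟩ := hG
    haveI : DecidableRel G.Adj := fun _ _ => Classical.dec _
    have key : ∀ (i j : Fin 3) (x : Fin n),
        (univ.filter (fun v => G.Adj (i, x) (j, v))).card ≤ 1 := by
      intro i j x
      rw [Finset.card_le_one]
      intro a ha b hb
      simp only [Finset.mem_filter] at ha hb
      have := hG2 (i, x) (j, a) (j, b) ha.2 hb.2 rfl
      exact congrArg Prod.snd this
    obtain ⟨b, hb⟩ := exists_avoiding_perm hn (fun m v => G.Adj (0, m) (1, v))
      (fun m => le_trans (key 0 1 m) (by norm_num))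
      (fun v => by
        have he : (univ.filter (fun m => G.Adj (0, m) (1, v)))
            = univ.filter (fun m => G.Adj (1, v) (0, m)) := by
          ext m; simp [G.adj_comm]
        rw [he]
        exact le_trans (key 1 0 v) (by norm_num))
    obtain ⟨c, hc⟩ := exists_avoiding_perm hn
      (fun m v => G.Adj (0, m) (2, v) ∨ G.Adj (1, b m) (2, v))
      (fun m => by
        rw [Finset.filter_or]
        calc _ ≤ _ := Finset.card_union_le _ _
          _ ≤ 1 + 1 := Nat.add_le_add (key 0 2 m) (key 1 2 (b m))
          _ ≤ 2 := by norm_num)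
      (fun v => by
        rw [Finset.filter_or]
        have h1 : (univ.filter (fun m => G.Adj (0, m) (2, v))).card ≤ 1 := by
          have he : (univ.filter (fun m => G.Adj (0, m) (2, v)))
              = univ.filter (fun m => G.Adj (2, v) (0, m)) := by
            ext m; simp [G.adj_comm]
          rw [he]; exact key 2 0 v
        have h2 : (univ.filter (fun m => G.Adj (1, b m) (2, v))).card ≤ 1 := by
          rw [Finset.card_le_one]
          intro x hx y hy
          simp only [Finset.mem_filter] at hx hy
          have := hG2 (2, v) (1, b x) (1, b y) hx.2.symm hy.2.symm rfl
          exact b.injective (congrArg Prod.snd this)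
        calc _ ≤ _ := Finset.card_union_le _ _
          _ ≤ 2 := by omega)
    refine ⟨fun m => ![(m : Fin n), b m, c m], fun m => ?_, fun i => ?_⟩
    · intro i j
      fin_cases i <;> fin_cases j
      · exact G.irrefl
      · exact hb m
      · exact fun h => hc m (Or.inl h)
      · exact fun h => hb m h.symm
      · exact G.irrefl
      · exact fun h => hc m (Or.inr h)
      · exact fun h => hc m (Or.inl h.symm)
      · exact fun h => hc m (Or.inr h.symm)
      · exact G.irrefl
    · fin_cases i
      · exact fun x y h => h
      · exact fun x y h => b.injective h
      · exact fun x y h => c.injective h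
  · refine ⟨exGraph, ?_, ?_⟩
    · unfold IsKN1Graph
      decide
    · have hdec : ¬ ∃ p q r : Fin 3 → Fin 3, Function.Injective p ∧ Function.Injective q ∧
          Function.Injective r ∧ ∀ m : Fin 3, exAdj (0, p m) (1, q m) = false ∧
          exAdj (0, p m) (2, r m) = false ∧ exAdj (1, q m) (2, r m) = false := by decide
      rintro ⟨T, hT, hinj⟩
      exact hdec ⟨fun m => T m 0, fun m => T m 1, fun m => T m 2, hinj 0, hinj 1, hinj 2,
        fun m => ⟨Bool.eq_false_iff.mpr (hT m 0 1), Bool.eq_false_iff.mpr (hT m 0 2),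
          Bool.eq_false_iff.mpr (hT m 1 2)⟩⟩
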